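/- Let F be a field and let A be an n × n matrix over F. Then A is the sum of an idempotent matrix and a nilpotent matrix that commute if and only if the characteristic polynomial of A is χ(A) = t^s(t − 1)^r for some integers s, r ≥ 0 with s + r = n. -/

import Mathlib

open Polynomial

universe u

/-- The Jacobson radical of a ring: the intersection of all maximal (left) ideals. -/
def jacobsonRadical (R : Type*) [Ring R] : Ideal R := Ideal.jacobson (⊥ : Ideal R)

/-- `J^#(R) = {x ∈ R : x ^ n ∈ J(R) for some n ∈ ℕ}`. -/
def Jsharp (R : Type*) [Ring R] : Set R :=
  {x | ∃ n : ℕ, 0 < n ∧ x ^ n ∈ jacobsonRadical R}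

/-- An element `a` is strongly `J^#`-clean if `a = e + u` with `e` idempotent,
`u ∈ J^#(R)` and `e * a = a * e`. -/
def IsStronglyJsharpClean {R : Type*} [Ring R] (a : R) : Prop :=
  ∃ e : R, IsIdempotentElem e ∧ a - e ∈ Jsharp R ∧ e * a = a * e

/-- A commutative ring is projective-free if every finitely generated projective
module is free. -/
def IsProjectiveFree (R : Type u) [CommRing R] : Prop :=
  ∀ (M : Type u) [AddCommGroup M] [Module R M],
    Module.Finite R M → Module.Projective R M → Module.Free R M

/-- `𝕁_r`: monic polynomials congruent to `(t - r) ^ deg f` modulo `J^#(R)`. -/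
def Jpoly {R : Type*} [CommRing R] (r : R) : Set R[X] :=
  {f | f.Monic ∧ ∀ i, (f - (X - C r) ^ f.natDegree).coeff i ∈ Jsharp R}

/-- a matrix over a field is the sum of an idempotent and a nilpotent
that commute iff its characteristic polynomial is `t ^ s * (t - 1) ^ r` with `s + r = n`. -/
lemma mulVec_pow_eig {K : Type*} [Field K] {m : ℕ} (B : Matrix (Fin m) (Fin m) K)
    (v : Fin m → K) (μ : K) (h : B.mulVec v = μ • v) (k : ℕ) :
    (B ^ k).mulVec v = μ ^ k • v := by
  induction k with
  | zero => simp
  | succ k ih =>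
    rw [pow_succ, ← Matrix.mulVec_mulVec, h, Matrix.mulVec_smul, ih, smul_smul, ← pow_succ']

lemma mulVec_aeval_eig {K : Type*} [Field K] {m : ℕ} (B : Matrix (Fin m) (Fin m) K)
    (v : Fin m → K) (μ : K) (h : B.mulVec v = μ • v) (p : K[X]) :
    (aeval B p).mulVec v = p.eval μ • v := by
  induction p using Polynomial.induction_on' with
  | add p q hp hq => rw [map_add, Matrix.add_mulVec, hp, hq, eval_add, add_smul]
  | monomial k a =>
    rw [aeval_monomial, eval_monomial, ← Matrix.mulVec_mulVec,
      mulVec_pow_eig B v μ h, Algebra.algebraMap_eq_smul_one,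
      Matrix.smul_mulVec, Matrix.one_mulVec, smul_smul]

lemma multiset_prod_zero_one {K : Type*} [Field K] [DecidableEq K] (t : Multiset K)
    (h : ∀ x ∈ t, x = 0 ∨ x = 1) :
    (t.map (fun μ => X - C μ)).prod = X ^ t.count 0 * (X - 1) ^ t.count 1 ∧
      t.count 0 + t.count 1 = Multiset.card t := by
  induction t using Multiset.induction_on with
  | empty => simp
  | cons a t ih =>
    obtain ⟨h1, h2⟩ := ih (fun x hx => h x (Multiset.mem_cons_of_mem hx))
    rcases h a (Multiset.mem_cons_self a t) with rfl | rfl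
    · rw [Multiset.map_cons, Multiset.prod_cons, h1,
        Multiset.count_cons_self, Multiset.count_cons_of_ne (by norm_num)]
      refine ⟨?_, by simp [h2, Nat.add_right_comm]⟩
      rw [pow_succ]; simp only [C_0, sub_zero]; ring
    · rw [Multiset.map_cons, Multiset.prod_cons, h1,
        Multiset.count_cons_self, Multiset.count_cons_of_ne (by norm_num)]
      refine ⟨?_, by simp [h2]; omega⟩
      rw [pow_succ]; simp only [C_1]; ring

theorem matrix_field_idempotent_add_nilpotent_iff {F : Type*} [Field F] {n : ℕ}
    (A : Matrix (Fin n) (Fin n) F) :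
    (∃ E W : Matrix (Fin n) (Fin n) F,
        IsIdempotentElem E ∧ IsNilpotent W ∧ E * W = W * E ∧ A = E + W) ↔
      ∃ s r : ℕ, s + r = n ∧ A.charpoly = X ^ s * (X - 1) ^ r := by
  classical
  constructor
  · rintro ⟨E, W, hE, hW, hcomm, rfl⟩
    set A := E + W with hA
    have hWE : Commute W E := hcomm.symm
    have hN : IsNilpotent (A * A - A) := by
      have key : A * A - A = W * (E + E + W - 1) := by
        rw [hA]
        simp only [mul_add, add_mul, mul_sub, mul_one, hE.eq, hcomm]
        abel
      rw [key]
      exact (((hWE.add_right hWE).add_right (Commute.refl W)).sub_right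
        (Commute.one_right W)).isNilpotent_mul_right hW
    set K := AlgebraicClosure F
    set φ : F →+* K := algebraMap F K with hφ
    set B : Matrix (Fin n) (Fin n) K := A.map φ with hB
    have hBN : IsNilpotent (B * B - B) := by
      simpa only [map_sub, map_mul, RingHom.mapMatrix_apply] using hN.map φ.mapMatrix
    have hmonic : (Matrix.charpoly B).Monic := Matrix.charpoly_monic B
    have hdeg : (Matrix.charpoly B).natDegree = n := by
      rw [Matrix.charpoly_natDegree_eq_dim, Fintype.card_fin]
    have hsplits : Splits (Matrix.charpoly B) :=
      IsAlgClosed.splits _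
    have hcard : Multiset.card (Matrix.charpoly B).roots = n := by
      rw [splits_iff_card_roots.1 hsplits, hdeg]
    have hroots : ∀ μ ∈ (Matrix.charpoly B).roots, μ = 0 ∨ μ = 1 := by
      intro μ hμ
      have hroot : (Matrix.charpoly B).eval μ = 0 :=
        isRoot_of_mem_roots hμ
      have hdet : (μ • (1 : Matrix (Fin n) (Fin n) K) - B).det = 0 := by
        have h1 : (Matrix.charpoly B).eval μ = ((Matrix.charmatrix B).map (eval μ)).det :=
          RingHom.map_det (evalRingHom μ) _
        have h2 : (Matrix.charmatrix B).map (eval μ) = μ • 1 - B := by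
          ext i j
          by_cases hij : i = j <;>
            simp [Matrix.charmatrix_apply, Matrix.map_apply, Matrix.diagonal_apply, hij,
              Matrix.one_apply, Matrix.sub_apply, Matrix.smul_apply]
        rw [← h2, ← h1, hroot]
      obtain ⟨v, hv0, hv⟩ := Matrix.exists_mulVec_eq_zero_iff.2 hdet
      have hBv : B.mulVec v = μ • v := by
        have := hv
        rw [Matrix.sub_mulVec, Matrix.smul_mulVec, Matrix.one_mulVec,
          sub_eq_zero] at this
        exact this.symm
      obtain ⟨m, hm⟩ := hBN
      have hz : aeval B ((X ^ 2 - X : K[X]) ^ (m + 1)) = 0 := by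
        rw [map_pow, map_sub, map_pow, aeval_X, pow_succ,
          show (B ^ 2 - B) = B * B - B by rw [sq], hm, zero_mul]
      have h0 : ((μ ^ 2 - μ) ^ (m + 1)) • v = 0 := by
        have := mulVec_aeval_eig B v μ hBv ((X ^ 2 - X) ^ (m + 1))
        rw [hz, Matrix.zero_mulVec] at this
        simpa [eval_pow, eval_sub, eval_X] using this.symm
      have hμ2 : μ ^ 2 - μ = 0 := by
        rcases smul_eq_zero.1 h0 with h | h
        · exact pow_eq_zero_iff (Nat.succ_ne_zero m) |>.1 h
        · exact absurd h hv0
      have : μ * (μ - 1) = 0 := by linear_combination hμ2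
      rcases mul_eq_zero.1 this with h | h
      · exact Or.inl h
      · exact Or.inr (sub_eq_zero.1 h)
    obtain ⟨hprod, hsum⟩ := multiset_prod_zero_one (Matrix.charpoly B).roots hroots
    set s0 := (Matrix.charpoly B).roots.count 0 with hs0
    set r0 := (Matrix.charpoly B).roots.count 1 with hr0
    have hcp : Matrix.charpoly B = X ^ s0 * (X - 1) ^ r0 := by
      rw [← prod_multiset_X_sub_C_of_monic_of_roots_card_eq hmonic (by rw [hcard, hdeg]), hprod]
    refine ⟨s0, r0, by rw [hsum, hcard], ?_⟩
    apply Polynomial.map_injective φ φ.injective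
    rw [show (Matrix.charpoly A).map φ = Matrix.charpoly B from
        (Matrix.charpoly_map A φ).symm, hcp,
      Polynomial.map_mul, Polynomial.map_pow, Polynomial.map_pow,
      Polynomial.map_X, Polynomial.map_sub, Polynomial.map_X, Polynomial.map_one]
  · rintro ⟨s, r, hsr, hch⟩
    have hco : IsCoprime ((X : F[X]) ^ s) ((X - 1) ^ r) :=
      IsCoprime.pow ⟨1, -1, by ring⟩
    obtain ⟨p, q, hpq⟩ := id hco
    set e : F[X] := p * X ^ s with he
    refine ⟨aeval A e, A - aeval A e, ?_, ?_, ?_, by abel⟩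
    · have hkey : e * e - e = (-(p * q)) * (X ^ s * (X - 1) ^ r) := by
        linear_combination e * hpq
      have h2 : aeval A (e * e) = aeval A e := by
        rw [← sub_eq_zero, ← map_sub, hkey, map_mul, ← hch,
          Matrix.aeval_self_charpoly, mul_zero]
      show aeval A e * aeval A e = aeval A e
      rw [← map_mul, h2]
    · have hdvd : (X : F[X]) ^ s * (X - 1) ^ r ∣ (X - e) ^ n := by
        refine hco.mul_dvd ?_ ?_
        · rcases Nat.eq_zero_or_pos s with rfl | hs
          · simpa using one_dvd _
          · have hx : (X : F[X]) ∣ X - e := by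
              refine dvd_sub dvd_rfl ?_
              exact Dvd.dvd.mul_left (dvd_pow_self X hs.ne') p
            exact (pow_dvd_pow X (by omega)).trans (pow_dvd_pow_of_dvd hx n)
        · rcases Nat.eq_zero_or_pos r with rfl | hr
          · simpa using one_dvd _
          · have hx : (X - 1 : F[X]) ∣ X - e := by
              have hxe : X - e = (X - 1) + q * (X - 1) ^ r := by
                linear_combination (-1 : F[X]) * hpq
              rw [hxe]
              exact dvd_add dvd_rfl (Dvd.dvd.mul_left (dvd_pow_self _ hr.ne') q)
            exact (pow_dvd_pow _ (by omega)).trans (pow_dvd_pow_of_dvd hx n)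
      obtain ⟨c, hc⟩ := hdvd
      refine ⟨n, ?_⟩
      rw [show A - aeval A e = aeval A (X - e) by rw [map_sub, aeval_X],
        ← map_pow, hc, map_mul, ← hch, Matrix.aeval_self_charpoly, zero_mul]
    · rw [show A - aeval A e = aeval A (X - e) by rw [map_sub, aeval_X],
        ← map_mul, ← map_mul, mul_comm e (X - e)]
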